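/- Let n ≥ 1 be an integer. There exists a constant C > 0 (depending only on n) such that: for every γ > 0 and every real K ≥ 1, there exists a closed subset D′ ⊆ [0,2π)^n with Lebesgue measure of [0,2π)^n ∖ D′ at most C·K^{n+1}·γ, such that for every ω ∈ D′, every k ∈ ℤ^n with 0 < |k| ≤ K, and every integer m, one has |k·ω − m| ≥ γ(1 + |m|). -/

import Mathlib

open MeasureTheory Set

lemma oneDim (a b ε : ℝ) (ha : a ≠ 0) :
    volume {x : ℝ | |a * x - b| < ε} ≤ ENNReal.ofReal (2 * (ε / |a|)) := by
  have hsub : {x : ℝ | |a * x - b| < ε} ⊆ Metric.ball (b / a) (ε / |a|) := by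
    intro x hx
    simp only [Set.mem_setOf_eq] at hx
    simp only [Metric.mem_ball, Real.dist_eq]
    have h1 : x - b / a = (a * x - b) / a := by
      rw [sub_div, mul_div_cancel_left₀ _ ha]
    rw [h1, abs_div]
    gcongr
  calc volume {x : ℝ | |a * x - b| < ε} ≤ volume (Metric.ball (b / a) (ε / |a|)) :=
        measure_mono hsub
    _ = ENNReal.ofReal (2 * (ε / |a|)) := Real.volume_ball _ _

lemma slab (N : ℕ) (L : ℝ) (hL : 0 ≤ L) (k : Fin (N + 1) → ℤ) (i0 : Fin (N + 1))
    (hki : k i0 ≠ 0) (b ε : ℝ) :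
    volume ((Set.univ.pi fun _ : Fin (N + 1) => Set.Ico (0 : ℝ) L) ∩
        {ω | |(∑ i, (k i : ℝ) * ω i) - b| < ε})
      ≤ ENNReal.ofReal (L ^ N * (2 * (ε / |(k i0 : ℝ)|))) := by
  set S := (Set.univ.pi fun _ : Fin (N + 1) => Set.Ico (0 : ℝ) L) ∩
      {ω | |(∑ i, (k i : ℝ) * ω i) - b| < ε} with hSdef
  have hf : Continuous fun ω : Fin (N + 1) → ℝ => ∑ i, (k i : ℝ) * ω i :=
    continuous_finset_sum _ fun i _ => continuous_const.mul (continuous_apply i)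
  have hopen : IsOpen {ω : Fin (N + 1) → ℝ | |(∑ i, (k i : ℝ) * ω i) - b| < ε} :=
    isOpen_lt ((hf.sub continuous_const).abs) continuous_const
  have hSm : MeasurableSet S :=
    (MeasurableSet.univ_pi fun _ => measurableSet_Ico).inter hopen.measurableSet
  set e := MeasurableEquiv.piFinSuccAbove (fun _ : Fin (N + 1) => ℝ) i0 with hedef
  have hp : MeasurePreserving e volume volume := volume_preserving_piFinSuccAbove _ i0
  have h1 : volume S = (volume : Measure (ℝ × (Fin N → ℝ))) (e.symm ⁻¹' S) :=
    ((hp.symm e).measure_preimage hSm.nullMeasurableSet).symm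
  have hTm : MeasurableSet (e.symm ⁻¹' S) := e.symm.measurable hSm
  have h2 : (volume : Measure (ℝ × (Fin N → ℝ))) (e.symm ⁻¹' S)
      = ∫⁻ y, volume ((fun x => (x, y)) ⁻¹' (e.symm ⁻¹' S)) := by
    rw [Measure.volume_eq_prod, Measure.prod_apply_symm hTm]
  have key : ∀ y : Fin N → ℝ,
      volume ((fun x => (x, y)) ⁻¹' (e.symm ⁻¹' S))
        ≤ (Set.univ.pi fun _ : Fin N => Set.Ico (0 : ℝ) L).indicator
            (fun _ => ENNReal.ofReal (2 * (ε / |(k i0 : ℝ)|))) y := by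
    intro y
    have hmem : ∀ x : ℝ, e.symm (x, y) = Fin.insertNth i0 x y := fun x => rfl
    by_cases hy : y ∈ Set.univ.pi fun _ : Fin N => Set.Ico (0 : ℝ) L
    · rw [Set.indicator_of_mem hy]
      have hsub : ((fun x => (x, y)) ⁻¹' (e.symm ⁻¹' S)) ⊆
          {x : ℝ | |(k i0 : ℝ) * x - (b - ∑ j, (k (i0.succAbove j) : ℝ) * y j)| < ε} := by
        intro x hx
        simp only [Set.mem_preimage, hmem] at hx
        obtain ⟨-, hx2⟩ := hx
        simp only [Set.mem_setOf_eq] at hx2 ⊢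
        rw [Fin.sum_univ_succAbove _ i0] at hx2
        simp only [Fin.insertNth_apply_same, Fin.insertNth_apply_succAbove] at hx2
        have h3 : (k i0 : ℝ) * x - (b - ∑ j, (k (i0.succAbove j) : ℝ) * y j)
            = (k i0 : ℝ) * x + (∑ j, (k (i0.succAbove j) : ℝ) * y j) - b := by ring
        rw [h3]
        exact hx2
      exact (measure_mono hsub).trans (oneDim _ _ _ (by exact_mod_cast hki))
    · rw [Set.indicator_of_notMem hy]
      have hem : ((fun x => (x, y)) ⁻¹' (e.symm ⁻¹' S)) = ∅ := by
        ext x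
        simp only [Set.mem_preimage, hmem, Set.mem_empty_iff_false, iff_false]
        rintro ⟨hx1, -⟩
        apply hy
        intro j _
        have := hx1 (i0.succAbove j) (Set.mem_univ _)
        rwa [Fin.insertNth_apply_succAbove] at this
      rw [hem, measure_empty]
  calc volume S = ∫⁻ y, volume ((fun x => (x, y)) ⁻¹' (e.symm ⁻¹' S)) := h1.trans h2
    _ ≤ ∫⁻ y, (Set.univ.pi fun _ : Fin N => Set.Ico (0 : ℝ) L).indicator
            (fun _ => ENNReal.ofReal (2 * (ε / |(k i0 : ℝ)|))) y := lintegral_mono key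
    _ = ENNReal.ofReal (2 * (ε / |(k i0 : ℝ)|)) *
          volume (Set.univ.pi fun _ : Fin N => Set.Ico (0 : ℝ) L) := by
        rw [lintegral_indicator (MeasurableSet.univ_pi fun _ => measurableSet_Ico),
          setLIntegral_const]
    _ = ENNReal.ofReal (L ^ N * (2 * (ε / |(k i0 : ℝ)|))) := by
        rw [volume_pi_pi]
        simp only [Real.volume_Ico, sub_zero, Finset.prod_const, Finset.card_univ,
          Fintype.card_fin]
        rw [← ENNReal.ofReal_pow hL, mul_comm,
          ← ENNReal.ofReal_mul (by positivity)]

def edgeSet (nn : ℕ) (a : ℝ) (i : Fin nn) : Set (Fin nn → ℝ) :=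
  Set.univ.pi fun j => if j = i then Set.Ioo a (2 * Real.pi) else Set.Ico 0 (2 * Real.pi)

def badSet (nn : ℕ) (γ : ℝ) (p : (Fin nn → ℤ) × ℤ) : Set (Fin nn → ℝ) :=
  (Set.univ.pi fun _ : Fin nn => Set.Ico (0 : ℝ) (2 * Real.pi)) ∩
    {ω | |(∑ i, (p.1 i : ℝ) * ω i) - (p.2 : ℝ)| < γ * (1 + |(p.2 : ℝ)|)}

noncomputable def FFin (nn : ℕ) (K : ℝ) : Finset ((Fin nn → ℤ) × ℤ) :=
  ((Fintype.piFinset fun _ : Fin nn => Finset.Icc (-⌊K⌋) ⌊K⌋) ×ˢ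
    Finset.Icc (-⌈17 * (nn : ℝ) * K⌉) ⌈17 * (nn : ℝ) * K⌉).filter fun p => p.1 ≠ 0

def Gset (nn : ℕ) (γ K : ℝ) : Set (Fin nn → ℝ) :=
  {ω | ∀ k : Fin nn → ℤ, 0 < ‖k‖ → ‖k‖ ≤ K → ∀ m : ℤ,
    γ * (1 + |(m : ℝ)|) ≤ |(∑ i, (k i : ℝ) * ω i) - (m : ℝ)|}

lemma sumbound (nn : ℕ) (k : Fin nn → ℤ) (B : ℝ) (hB : 0 ≤ B)
    (hkB : ∀ i, |(k i : ℝ)| ≤ B) (ω : Fin nn → ℝ)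
    (hω : ω ∈ Set.univ.pi fun _ : Fin nn => Set.Ico (0 : ℝ) (2 * Real.pi)) :
    |∑ i, (k i : ℝ) * ω i| ≤ (nn : ℝ) * (B * 8) := by
  have hP8 : (2 : ℝ) * Real.pi ≤ 8 := by nlinarith [Real.pi_lt_d2]
  calc |∑ i, (k i : ℝ) * ω i| ≤ ∑ i, |(k i : ℝ) * ω i| := Finset.abs_sum_le_sum_abs _ _
    _ ≤ ∑ _i : Fin nn, B * 8 := by
        refine Finset.sum_le_sum fun i _ => ?_
        rw [abs_mul]
        have h1 := hω i (Set.mem_univ i)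
        have h2 : |ω i| ≤ 8 := by
          rw [abs_of_nonneg h1.1]; linarith [h1.2]
        exact mul_le_mul (hkB i) h2 (abs_nonneg _) hB
    _ = (nn : ℝ) * (B * 8) := by
        rw [Finset.sum_const, Finset.card_univ, Fintype.card_fin, nsmul_eq_mul]

lemma pairvol (N0 : ℕ) (γ : ℝ) (hγ : 0 < γ) (hγ2 : γ < 1 / 2)
    (k : Fin (N0 + 1) → ℤ) (hk : k ≠ 0) (m : ℤ) :
    volume (badSet (N0 + 1) γ (k, m))
      ≤ ENNReal.ofReal ((2 * Real.pi) ^ N0 * (36 * ((N0 : ℝ) + 1) * γ)) := by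
  have hP0 : (0 : ℝ) < 2 * Real.pi := by positivity
  have hnn1 : (1 : ℝ) ≤ (N0 : ℝ) + 1 := by
    have := Nat.cast_nonneg (α := ℝ) N0; linarith
  obtain ⟨i0, -, hi0⟩ := Finset.exists_max_image (Finset.univ : Finset (Fin (N0 + 1)))
    (fun i => |k i|) Finset.univ_nonempty
  obtain ⟨j, hj⟩ := Function.ne_iff.mp hk
  have hk1 : 1 ≤ |k i0| := le_trans (Int.one_le_abs hj) (hi0 j (Finset.mem_univ j))
  have hki0 : k i0 ≠ 0 := by intro h; rw [h] at hk1; simp at hk1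
  have hk1R : (1 : ℝ) ≤ |(k i0 : ℝ)| := by rw [← Int.cast_abs]; exact_mod_cast hk1
  have hkle : ∀ i, |(k i : ℝ)| ≤ |(k i0 : ℝ)| := by
    intro i; rw [← Int.cast_abs, ← Int.cast_abs]
    exact_mod_cast hi0 i (Finset.mem_univ i)
  by_cases hm : |(m : ℝ)| ≤ 17 * ((N0 : ℝ) + 1) * |(k i0 : ℝ)|
  · calc volume (badSet (N0 + 1) γ (k, m))
        ≤ ENNReal.ofReal ((2 * Real.pi) ^ N0 *
            (2 * ((γ * (1 + |(m : ℝ)|)) / |(k i0 : ℝ)|))) :=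
          slab N0 (2 * Real.pi) hP0.le k i0 hki0 (m : ℝ) (γ * (1 + |(m : ℝ)|))
      _ ≤ ENNReal.ofReal ((2 * Real.pi) ^ N0 * (36 * ((N0 : ℝ) + 1) * γ)) := by
          apply ENNReal.ofReal_le_ofReal
          have hA : (0 : ℝ) < |(k i0 : ℝ)| := by linarith
          have hnA : (1 : ℝ) ≤ ((N0 : ℝ) + 1) * |(k i0 : ℝ)| := by nlinarith
          have hdiv : γ * (1 + |(m : ℝ)|) / |(k i0 : ℝ)| ≤ 18 * ((N0 : ℝ) + 1) * γ := by
            rw [div_le_iff₀ hA]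
            nlinarith [mul_le_mul_of_nonneg_left hm hγ.le,
              mul_le_mul_of_nonneg_left hnA hγ.le]
          exact mul_le_mul_of_nonneg_left (by linarith) (pow_nonneg hP0.le N0)
  · have hempty : badSet (N0 + 1) γ (k, m) = ∅ := by
      rw [Set.eq_empty_iff_forall_notMem]
      rintro ω ⟨hb, habs⟩
      simp only [Set.mem_setOf_eq] at habs
      have hS := sumbound (N0 + 1) k |(k i0 : ℝ)| (abs_nonneg _) hkle ω hb
      push_cast at hS
      have h0 : |(m : ℝ)| = |(∑ i, (k i : ℝ) * ω i) -
          ((∑ i, (k i : ℝ) * ω i) - (m : ℝ))| := by congr 1; ring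
      have htri : |(m : ℝ)| ≤ |∑ i, (k i : ℝ) * ω i| +
          |(∑ i, (k i : ℝ) * ω i) - (m : ℝ)| := by
        rw [h0]; exact abs_sub _ _
      push_neg at hm
      have hnA : (1 : ℝ) ≤ ((N0 : ℝ) + 1) * |(k i0 : ℝ)| := by nlinarith
      nlinarith [mul_nonneg (by linarith : (0 : ℝ) ≤ 1 / 2 - γ)
        (by positivity : (0 : ℝ) ≤ 1 + |(m : ℝ)|)]
    rw [hempty, measure_empty]
    exact zero_le

lemma edgevol (nn : ℕ) (i : Fin nn) (a : ℝ) (haP : a ≤ 2 * Real.pi) :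
    volume (edgeSet nn a i)
      = ENNReal.ofReal (2 * Real.pi - a) * ENNReal.ofReal (2 * Real.pi) ^ (nn - 1) := by
  rw [edgeSet, volume_pi_pi]
  have h1 : ∀ j : Fin nn,
      volume (if j = i then Set.Ioo a (2 * Real.pi) else Set.Ico (0 : ℝ) (2 * Real.pi))
      = if j = i then ENNReal.ofReal (2 * Real.pi - a) else ENNReal.ofReal (2 * Real.pi) := by
    intro j
    split_ifs
    · rw [Real.volume_Ioo]
    · rw [Real.volume_Ico, sub_zero]
  simp_rw [h1]
  rw [← Finset.mul_prod_erase Finset.univ _ (Finset.mem_univ i), if_pos rfl]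
  have h2 : ∀ j ∈ Finset.univ.erase i,
      (if j = i then ENNReal.ofReal (2 * Real.pi - a) else ENNReal.ofReal (2 * Real.pi))
        = ENNReal.ofReal (2 * Real.pi) :=
    fun j hj => if_neg (Finset.mem_erase.mp hj).1
  rw [Finset.prod_congr rfl h2, Finset.prod_const, Finset.card_erase_of_mem
    (Finset.mem_univ i), Finset.card_univ, Fintype.card_fin]

lemma edgesum (N0 : ℕ) (a : ℝ) (haP : a ≤ 2 * Real.pi) :
    volume (⋃ i, edgeSet (N0 + 1) a i)
      ≤ ENNReal.ofReal (((N0 : ℝ) + 1) * ((2 * Real.pi - a) * (2 * Real.pi) ^ N0)) := by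
  have hP0 : (0 : ℝ) < 2 * Real.pi := by positivity
  calc volume (⋃ i, edgeSet (N0 + 1) a i)
      ≤ ∑ i : Fin (N0 + 1), volume (edgeSet (N0 + 1) a i) := measure_iUnion_fintype_le _ _
    _ = ∑ _i : Fin (N0 + 1), ENNReal.ofReal ((2 * Real.pi - a) * (2 * Real.pi) ^ N0) := by
        refine Finset.sum_congr rfl fun i _ => ?_
        rw [edgevol (N0 + 1) i a haP]
        simp only [Nat.add_sub_cancel]
        rw [← ENNReal.ofReal_pow hP0.le, ← ENNReal.ofReal_mul (by linarith)]
    _ = (N0 + 1) • ENNReal.ofReal ((2 * Real.pi - a) * (2 * Real.pi) ^ N0) := by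
        rw [Finset.sum_const, Finset.card_univ, Fintype.card_fin]
    _ = ENNReal.ofReal (((N0 : ℝ) + 1) * ((2 * Real.pi - a) * (2 * Real.pi) ^ N0)) := by
        rw [nsmul_eq_mul, ← ENNReal.ofReal_natCast (N0 + 1),
          ← ENNReal.ofReal_mul (by positivity)]
        push_cast
        ring_nf

lemma coverlem (N0 : ℕ) (γ K : ℝ) (hγ : 0 < γ) (hγ2 : γ < 1 / 2) (hK : 1 ≤ K) :
    (Set.univ.pi fun _ : Fin (N0 + 1) => Set.Ico (0 : ℝ) (2 * Real.pi)) \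
        ((Set.univ.pi fun _ : Fin (N0 + 1) => Set.Icc (0 : ℝ) (2 * Real.pi - γ)) ∩
          Gset (N0 + 1) γ K) ⊆
      (⋃ i, edgeSet (N0 + 1) (2 * Real.pi - γ) i) ∪
        ⋃ p ∈ FFin (N0 + 1) K, badSet (N0 + 1) γ p := by
  have hnn1 : (1 : ℝ) ≤ (N0 : ℝ) + 1 := by
    have := Nat.cast_nonneg (α := ℝ) N0; linarith
  rintro ω ⟨hb, hD⟩
  by_cases hIcc : ω ∈ Set.univ.pi fun _ : Fin (N0 + 1) => Set.Icc (0 : ℝ) (2 * Real.pi - γ)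
  · have hnG : ω ∉ Gset (N0 + 1) γ K := fun h => hD ⟨hIcc, h⟩
    simp only [Gset, Set.mem_setOf_eq] at hnG
    push_neg at hnG
    obtain ⟨k, hk0, hkK, m, hlt⟩ := hnG
    have hkiK : ∀ i, |(k i : ℝ)| ≤ K := by
      intro i
      calc |(k i : ℝ)| = ‖k i‖ := (Int.norm_eq_abs _).symm
        _ ≤ ‖k‖ := norm_le_pi_norm k i
        _ ≤ K := hkK
    right
    have hS := sumbound (N0 + 1) k K (by linarith) hkiK ω hb
    push_cast at hS
    have h0 : |(m : ℝ)| = |(∑ i, (k i : ℝ) * ω i) -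
        ((∑ i, (k i : ℝ) * ω i) - (m : ℝ))| := by congr 1; ring
    have htri : |(m : ℝ)| ≤ |∑ i, (k i : ℝ) * ω i| +
        |(∑ i, (k i : ℝ) * ω i) - (m : ℝ)| := by
      rw [h0]; exact abs_sub _ _
    have hnK : (1 : ℝ) ≤ ((N0 : ℝ) + 1) * K := by nlinarith
    have hmR : |(m : ℝ)| ≤ 17 * ((N0 : ℝ) + 1) * K := by
      nlinarith [mul_nonneg (by linarith : (0 : ℝ) ≤ 1 / 2 - γ)
        (by positivity : (0 : ℝ) ≤ 1 + |(m : ℝ)|)]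
    have hM1 : (17 * ((N0 : ℝ) + 1) * K) ≤ (⌈17 * ((N0 : ℕ) + 1 : ℝ) * K⌉ : ℝ) := by
      push_cast
      exact Int.le_ceil _
    have hmem : (k, m) ∈ FFin (N0 + 1) K := by
      rw [FFin, Finset.mem_filter]
      refine ⟨Finset.mem_product.mpr ⟨?_, ?_⟩, ?_⟩
      · show k ∈ Fintype.piFinset fun _ : Fin (N0 + 1) => Finset.Icc (-⌊K⌋) ⌊K⌋
        rw [Fintype.mem_piFinset]
        intro i
        rw [Finset.mem_Icc]
        have h2 : k i ≤ ⌊K⌋ := Int.le_floor.mpr ((le_abs_self _).trans (hkiK i))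
        have h3 : -k i ≤ ⌊K⌋ := Int.le_floor.mpr (by
          push_cast
          exact (neg_le_abs _).trans (hkiK i))
        omega
      · show m ∈ Finset.Icc (-⌈17 * ((N0 + 1 : ℕ) : ℝ) * K⌉) ⌈17 * ((N0 + 1 : ℕ) : ℝ) * K⌉
        rw [Finset.mem_Icc]
        constructor
        · have h4 : -(⌈17 * ((N0 + 1 : ℕ) : ℝ) * K⌉ : ℝ) ≤ (m : ℝ) := by
            push_cast at hM1 ⊢
            nlinarith [neg_abs_le (m : ℝ)]
          exact_mod_cast h4
        · have h5 : (m : ℝ) ≤ (⌈17 * ((N0 + 1 : ℕ) : ℝ) * K⌉ : ℝ) := by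
            push_cast at hM1 ⊢
            nlinarith [le_abs_self (m : ℝ)]
          exact_mod_cast h5
      · show k ≠ 0
        exact norm_pos_iff.mp hk0
    exact Set.mem_biUnion hmem ⟨hb, hlt⟩
  · left
    have hex : ∃ i, ω i ∉ Set.Icc (0 : ℝ) (2 * Real.pi - γ) := by
      by_contra hc
      push_neg at hc
      exact hIcc fun i _ => hc i
    obtain ⟨i, hi⟩ := hex
    have hbi := hb i (Set.mem_univ i)
    have hai : 2 * Real.pi - γ < ω i := by
      rw [Set.mem_Icc] at hi
      push_neg at hi
      exact hi hbi.1
    refine Set.mem_iUnion.mpr ⟨i, ?_⟩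
    intro j _
    dsimp only
    split_ifs with hj
    · rw [hj]; exact ⟨hai, hbi.2⟩
    · exact hb j (Set.mem_univ j)

lemma cardlem (N0 : ℕ) (K : ℝ) (hK : 1 ≤ K) :
    ((FFin (N0 + 1) K).card : ℝ) ≤ (3 * K) ^ (N0 + 1) * (37 * ((N0 : ℝ) + 1) * K) := by
  have hnn1 : (1 : ℝ) ≤ (N0 : ℝ) + 1 := by
    have := Nat.cast_nonneg (α := ℝ) N0; linarith
  have hnK : (1 : ℝ) ≤ ((N0 : ℝ) + 1) * K := by nlinarith
  set M : ℤ := ⌈17 * ((N0 + 1 : ℕ) : ℝ) * K⌉ with hM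
  have hM1 : (17 * ((N0 : ℝ) + 1) * K) ≤ (M : ℝ) := by
    rw [hM]; push_cast; exact_mod_cast Int.le_ceil _
  have hMle : (M : ℝ) ≤ 17 * ((N0 : ℝ) + 1) * K + 1 := by
    rw [hM]; push_cast; exact_mod_cast (Int.ceil_lt_add_one _).le
  have hM1' : (1 : ℤ) ≤ M := by
    have h : (1 : ℝ) ≤ (M : ℝ) := by nlinarith
    exact_mod_cast h
  have hNI1 : 1 ≤ ⌊K⌋ := Int.le_floor.mpr (by exact_mod_cast hK)
  have hNIK : ((⌊K⌋ : ℤ) : ℝ) ≤ K := Int.floor_le K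
  have h1 : (FFin (N0 + 1) K).card ≤
      (Fintype.piFinset fun _ : Fin (N0 + 1) => Finset.Icc (-⌊K⌋) ⌊K⌋).card *
        (Finset.Icc (-M) M).card := by
    rw [FFin]
    exact le_trans (Finset.card_filter_le _ _) (le_of_eq (Finset.card_product _ _))
  have hkFcard : (Fintype.piFinset fun _ : Fin (N0 + 1) => Finset.Icc (-⌊K⌋) ⌊K⌋).card
      = ((2 * ⌊K⌋ + 1).toNat) ^ (N0 + 1) := by
    rw [Fintype.card_piFinset, Finset.prod_const, Finset.card_univ, Fintype.card_fin]
    congr 1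
    rw [Int.card_Icc]
    congr 1
    omega
  have hMcard : (Finset.Icc (-M) M).card = (2 * M + 1).toNat := by
    rw [Int.card_Icc]; congr 1; ring
  have hNIr : (((2 * ⌊K⌋ + 1).toNat : ℕ) : ℝ) ≤ 3 * K := by
    have h2 : ((2 * ⌊K⌋ + 1).toNat : ℤ) = 2 * ⌊K⌋ + 1 := Int.toNat_of_nonneg (by omega)
    have h3 : (((2 * ⌊K⌋ + 1).toNat : ℕ) : ℝ) = 2 * ((⌊K⌋ : ℤ) : ℝ) + 1 := by
      exact_mod_cast congrArg (fun z : ℤ => (z : ℝ)) h2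
    rw [h3]; linarith
  have hMr : (((2 * M + 1).toNat : ℕ) : ℝ) ≤ 37 * ((N0 : ℝ) + 1) * K := by
    have h2 : ((2 * M + 1).toNat : ℤ) = 2 * M + 1 := Int.toNat_of_nonneg (by omega)
    have h3 : (((2 * M + 1).toNat : ℕ) : ℝ) = 2 * (M : ℝ) + 1 := by
      exact_mod_cast congrArg (fun z : ℤ => (z : ℝ)) h2
    rw [h3]; nlinarith
  calc ((FFin (N0 + 1) K).card : ℝ)
      ≤ (((Fintype.piFinset fun _ : Fin (N0 + 1) => Finset.Icc (-⌊K⌋) ⌊K⌋).card *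
          (Finset.Icc (-M) M).card : ℕ) : ℝ) := by exact_mod_cast h1
    _ = (((2 * ⌊K⌋ + 1).toNat : ℕ) : ℝ) ^ (N0 + 1) * (((2 * M + 1).toNat : ℕ) : ℝ) := by
        rw [hkFcard, hMcard]; push_cast; ring
    _ ≤ (3 * K) ^ (N0 + 1) * (37 * ((N0 : ℝ) + 1) * K) :=
        mul_le_mul (pow_le_pow_left₀ (by positivity) hNIr (N0 + 1)) hMr
          (by positivity) (by positivity)

theorem stmt4 (n : ℕ) (hn : 1 ≤ n) :
    ∃ C > 0, ∀ γ : ℝ, 0 < γ → ∀ K : ℝ, 1 ≤ K →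
      ∃ D' : Set (Fin n → ℝ), IsClosed D' ∧
        D' ⊆ Set.univ.pi (fun _ => Set.Ico 0 (2 * Real.pi)) ∧
        volume (Set.univ.pi (fun _ => Set.Ico (0 : ℝ) (2 * Real.pi)) \ D') ≤
          ENNReal.ofReal (C * K ^ (n + 1) * γ) ∧
        ∀ ω ∈ D', ∀ k : Fin n → ℤ, 0 < ‖k‖ → ‖k‖ ≤ K → ∀ m : ℤ,
          γ * (1 + |(m : ℝ)|) ≤ |(∑ i, (k i : ℝ) * ω i) - (m : ℝ)| := by
  obtain ⟨N0, rfl⟩ : ∃ m, n = m + 1 := ⟨n - 1, by omega⟩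
  have hP1 : (1 : ℝ) ≤ 2 * Real.pi := by nlinarith [Real.pi_gt_three]
  have hP0 : (0 : ℝ) < 2 * Real.pi := by positivity
  have hnn1 : (1 : ℝ) ≤ (N0 : ℝ) + 1 := by
    have := Nat.cast_nonneg (α := ℝ) N0; linarith
  have hC2 : (0 : ℝ) ≤ ((N0 : ℝ) + 1) + 1332 * ((N0 : ℝ) + 1) ^ 2 * 3 ^ (N0 + 1) := by positivity
  refine ⟨(2 * Real.pi) ^ (N0 + 1) * (2 + ((N0 : ℝ) + 1) + 1332 * ((N0 : ℝ) + 1) ^ 2 * 3 ^ (N0 + 1)),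
    by positivity, ?_⟩
  intro γ hγ K hK
  have hK1 : (1 : ℝ) ≤ K ^ (N0 + 1 + 1) := one_le_pow₀ hK
  have hbox : volume (Set.univ.pi fun _ : Fin (N0 + 1) => Set.Ico (0 : ℝ) (2 * Real.pi))
      = ENNReal.ofReal ((2 * Real.pi) ^ (N0 + 1)) := by
    rw [volume_pi_pi]
    simp only [Real.volume_Ico, sub_zero, Finset.prod_const, Finset.card_univ,
      Fintype.card_fin]
    rw [← ENNReal.ofReal_pow hP0.le]
  by_cases hγ2 : 1 / 2 ≤ γ
  · refine ⟨∅, isClosed_empty, empty_subset _, ?_, by simp⟩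
    rw [diff_empty, hbox]
    apply ENNReal.ofReal_le_ofReal
    calc (2 * Real.pi) ^ (N0 + 1)
        = ((2 * Real.pi) ^ (N0 + 1) * 2) * (1 * (1 / 2)) := by ring
      _ ≤ ((2 * Real.pi) ^ (N0 + 1) * (2 + ((N0 : ℝ) + 1) + 1332 * ((N0 : ℝ) + 1) ^ 2 * 3 ^ (N0 + 1))) *
            (K ^ (N0 + 1 + 1) * γ) := by
          apply mul_le_mul
          · exact mul_le_mul_of_nonneg_left (by linarith) (pow_nonneg hP0.le _)
          · exact mul_le_mul hK1 hγ2 (by norm_num) (le_trans zero_le_one hK1)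
          · norm_num
          · positivity
      _ = (2 * Real.pi) ^ (N0 + 1) * (2 + ((N0 : ℝ) + 1) + 1332 * ((N0 : ℝ) + 1) ^ 2 * 3 ^ (N0 + 1)) *
            K ^ (N0 + 1 + 1) * γ := by ring
  push_neg at hγ2
  refine ⟨(Set.univ.pi fun _ : Fin (N0 + 1) => Set.Icc (0 : ℝ) (2 * Real.pi - γ)) ∩
    Gset (N0 + 1) γ K, ?_, ?_, ?_, ?_⟩
  · refine (isClosed_set_pi fun i _ => isClosed_Icc).inter ?_
    have hGeq : Gset (N0 + 1) γ K = ⋂ (k : Fin (N0 + 1) → ℤ), ⋂ (_ : 0 < ‖k‖),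
        ⋂ (_ : ‖k‖ ≤ K), ⋂ (m : ℤ),
        {ω : Fin (N0 + 1) → ℝ | γ * (1 + |(m : ℝ)|) ≤ |(∑ i, (k i : ℝ) * ω i) - (m : ℝ)|} := by
      ext ω
      simp only [Gset, Set.mem_setOf_eq, Set.mem_iInter]
    rw [hGeq]
    exact isClosed_iInter fun k => isClosed_iInter fun _ => isClosed_iInter fun _ =>
      isClosed_iInter fun m => isClosed_le continuous_const
        (((continuous_finset_sum _ fun i _ =>
          continuous_const.mul (continuous_apply i)).sub continuous_const).abs)
  · intro ω hω i _
    have h1 := hω.1 i (Set.mem_univ i)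
    exact ⟨h1.1, lt_of_le_of_lt h1.2 (by linarith)⟩
  · refine le_trans (measure_mono (coverlem N0 γ K hγ hγ2 hK)) ?_
    refine le_trans (measure_union_le _ _) ?_
    have hedge := edgesum N0 (2 * Real.pi - γ) (by linarith)
    rw [show 2 * Real.pi - (2 * Real.pi - γ) = γ from by ring] at hedge
    have hbadsum : volume (⋃ p ∈ FFin (N0 + 1) K, badSet (N0 + 1) γ p)
        ≤ ENNReal.ofReal (((3 * K) ^ (N0 + 1) * (37 * ((N0 : ℝ) + 1) * K)) *
            ((2 * Real.pi) ^ N0 * (36 * ((N0 : ℝ) + 1) * γ))) := by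
      calc volume (⋃ p ∈ FFin (N0 + 1) K, badSet (N0 + 1) γ p)
          ≤ ∑ p ∈ FFin (N0 + 1) K, volume (badSet (N0 + 1) γ p) :=
            measure_biUnion_finset_le _ _
        _ ≤ ∑ _p ∈ FFin (N0 + 1) K,
              ENNReal.ofReal ((2 * Real.pi) ^ N0 * (36 * ((N0 : ℝ) + 1) * γ)) := by
            refine Finset.sum_le_sum fun p hp => ?_
            have hpne : p.1 ≠ 0 := (Finset.mem_filter.mp hp).2
            exact pairvol N0 γ hγ hγ2 p.1 hpne p.2
        _ = (FFin (N0 + 1) K).card • ENNReal.ofReal ((2 * Real.pi) ^ N0 * (36 * ((N0 : ℝ) + 1) * γ)) :=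
            Finset.sum_const _
        _ ≤ ENNReal.ofReal (((3 * K) ^ (N0 + 1) * (37 * ((N0 : ℝ) + 1) * K)) *
              ((2 * Real.pi) ^ N0 * (36 * ((N0 : ℝ) + 1) * γ))) := by
            rw [nsmul_eq_mul, ← ENNReal.ofReal_natCast, ← ENNReal.ofReal_mul (by positivity)]
            apply ENNReal.ofReal_le_ofReal
            exact mul_le_mul_of_nonneg_right (cardlem N0 K hK) (by positivity)
    refine le_trans (add_le_add hedge hbadsum) ?_
    rw [← ENNReal.ofReal_add (by positivity) (by positivity)]
    apply ENNReal.ofReal_le_ofReal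
    have hPow : (2 * Real.pi) ^ N0 ≤ (2 * Real.pi) ^ (N0 + 1) :=
      pow_le_pow_right₀ hP1 (by omega)
    have e1 : ((N0 : ℝ) + 1) * (γ * (2 * Real.pi) ^ N0)
        ≤ (2 * Real.pi) ^ (N0 + 1) * ((N0 : ℝ) + 1) * K ^ (N0 + 1 + 1) * γ := by
      calc ((N0 : ℝ) + 1) * (γ * (2 * Real.pi) ^ N0) ≤ ((N0 : ℝ) + 1) * (γ * (2 * Real.pi) ^ (N0 + 1)) :=
            mul_le_mul_of_nonneg_left
              (mul_le_mul_of_nonneg_left hPow hγ.le) (by positivity)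
        _ = (2 * Real.pi) ^ (N0 + 1) * ((N0 : ℝ) + 1) * 1 * γ := by ring
        _ ≤ (2 * Real.pi) ^ (N0 + 1) * ((N0 : ℝ) + 1) * K ^ (N0 + 1 + 1) * γ :=
            mul_le_mul_of_nonneg_right
              (mul_le_mul_of_nonneg_left hK1 (by positivity)) hγ.le
    have e2 : ((3 * K) ^ (N0 + 1) * (37 * ((N0 : ℝ) + 1) * K)) * ((2 * Real.pi) ^ N0 * (36 * ((N0 : ℝ) + 1) * γ))
        ≤ (2 * Real.pi) ^ (N0 + 1) * (1332 * ((N0 : ℝ) + 1) ^ 2 * 3 ^ (N0 + 1)) * K ^ (N0 + 1 + 1) * γ := by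
      calc ((3 * K) ^ (N0 + 1) * (37 * ((N0 : ℝ) + 1) * K)) * ((2 * Real.pi) ^ N0 * (36 * ((N0 : ℝ) + 1) * γ))
          ≤ ((3 * K) ^ (N0 + 1) * (37 * ((N0 : ℝ) + 1) * K)) *
              ((2 * Real.pi) ^ (N0 + 1) * (36 * ((N0 : ℝ) + 1) * γ)) := by
            apply mul_le_mul_of_nonneg_left
              (mul_le_mul_of_nonneg_right hPow (by positivity)) (by positivity)
        _ = (2 * Real.pi) ^ (N0 + 1) * (1332 * ((N0 : ℝ) + 1) ^ 2 * 3 ^ (N0 + 1)) *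
              K ^ (N0 + 1 + 1) * γ := by
            rw [mul_pow]; ring
    have e3 : (2 * Real.pi) ^ (N0 + 1) * (2 + ((N0 : ℝ) + 1) + 1332 * ((N0 : ℝ) + 1) ^ 2 * 3 ^ (N0 + 1)) *
          K ^ (N0 + 1 + 1) * γ -
        ((2 * Real.pi) ^ (N0 + 1) * ((N0 : ℝ) + 1) * K ^ (N0 + 1 + 1) * γ +
         (2 * Real.pi) ^ (N0 + 1) * (1332 * ((N0 : ℝ) + 1) ^ 2 * 3 ^ (N0 + 1)) * K ^ (N0 + 1 + 1) * γ)
        = 2 * ((2 * Real.pi) ^ (N0 + 1) * K ^ (N0 + 1 + 1) * γ) := by ring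
    nlinarith [e1, e2, e3, mul_nonneg (mul_nonneg (pow_nonneg hP0.le (N0 + 1))
      (pow_nonneg (by linarith : (0 : ℝ) ≤ K) (N0 + 1 + 1))) hγ.le]
  · intro ω hω k hk0 hkK m
    exact hω.2 k hk0 hkK m
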